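/- The Perplexbric P³ is an octahedron: for c₁, c₄, c₆ ∈ ℝ and c = ((c₁, c₄·i), (c₆·i, 0)) ∈ 𝕄(3) (i.e. c = c₁·1 + c₄·j₁ + c₆·j₂, where j₁ = ((0,i),(0,0)) and j₂ = ((0,0),(i,0))), the sequence (Q_{3,c}^m(0))_{m≥1} is bounded in ‖·‖₃ if and only if |c₁| + |c₄| + |c₆| ≤ 2/(3√3). In particular, P³ is a regular octahedron with edge length 2√2/(3√3). -/

import Mathlib

/-- Bicomplex multiplication on ℂ × ℂ. -/
def bcMul (z w : ℂ × ℂ) : ℂ × ℂ := (z.1 * w.1 - z.2 * w.2, z.1 * w.2 + z.2 * w.1)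

/-- The bicomplex norm ‖(z₁,z₂)‖₂ = √(|z₁|² + |z₂|²). -/
noncomputable def bcNorm (z : ℂ × ℂ) : ℝ :=
  Real.sqrt (‖z.1‖ ^ 2 + ‖z.2‖ ^ 2)

/-- Tricomplex multiplication on 𝕄(2) × 𝕄(2). -/
def tcMul (z w : (ℂ × ℂ) × (ℂ × ℂ)) : (ℂ × ℂ) × (ℂ × ℂ) :=
  (bcMul z.1 w.1 - bcMul z.2 w.2, bcMul z.1 w.2 + bcMul z.2 w.1)

/-- The tricomplex norm ‖(ζ₁,ζ₂)‖₃ = √(‖ζ₁‖₂² + ‖ζ₂‖₂²). -/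
noncomputable def tcNorm (z : (ℂ × ℂ) × (ℂ × ℂ)) : ℝ :=
  Real.sqrt (bcNorm z.1 ^ 2 + bcNorm z.2 ^ 2)

/-- The tricomplex cubic polynomial Q_{3,c}(η) = η³ + c. -/
def tcQ3 (c : (ℂ × ℂ) × (ℂ × ℂ)) (z : (ℂ × ℂ) × (ℂ × ℂ)) :
    (ℂ × ℂ) × (ℂ × ℂ) := tcMul (tcMul z z) z + c

abbrev Q4 := ℝ × ℝ × ℝ × ℝ

def qMul (x y : Q4) : Q4 :=
  (x.1*y.1 + x.2.1*y.2.1 + x.2.2.1*y.2.2.1 + x.2.2.2*y.2.2.2,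
   x.1*y.2.1 + x.2.1*y.1 - x.2.2.1*y.2.2.2 - x.2.2.2*y.2.2.1,
   x.1*y.2.2.1 + x.2.2.1*y.1 - x.2.1*y.2.2.2 - x.2.2.2*y.2.1,
   x.1*y.2.2.2 + x.2.2.2*y.1 - x.2.1*y.2.2.1 - x.2.2.1*y.2.1)

noncomputable def qE (x : Q4) : (ℂ × ℂ) × (ℂ × ℂ) :=
  (((x.1 : ℂ), (x.2.1 : ℂ) * Complex.I), ((x.2.2.1 : ℂ) * Complex.I, (x.2.2.2 : ℂ)))

lemma tcMul_qE (x y : Q4) : tcMul (qE x) (qE y) = qE (qMul x y) := by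
  obtain ⟨p, q, r, s⟩ := x
  obtain ⟨p', q', r', s'⟩ := y
  simp only [tcMul, bcMul, qE, qMul, Prod.mk.injEq, Prod.mk_sub_mk, Prod.mk_add_mk]
  refine ⟨⟨?_, ?_⟩, ?_, ?_⟩
  · push_cast
    linear_combination (-((q:ℂ)*q' + (r:ℂ)*r')) * Complex.I_sq
  · push_cast; ring
  · push_cast; ring
  · push_cast
    linear_combination ((q:ℂ)*r' + (r:ℂ)*q') * Complex.I_sq

lemma qE_add (x y : Q4) : qE (x + y) = qE x + qE y := by
  obtain ⟨p, q, r, s⟩ := x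
  obtain ⟨p', q', r', s'⟩ := y
  simp only [qE, Prod.mk_add_mk, Prod.mk.injEq]
  refine ⟨⟨?_, ?_⟩, ?_, ?_⟩ <;> push_cast <;> ring

def qStep (c x : Q4) : Q4 := qMul (qMul x x) x + c

lemma tcQ3_qE (c x : Q4) : tcQ3 (qE c) (qE x) = qE (qStep c x) := by
  rw [tcQ3, qStep, tcMul_qE, tcMul_qE, qE_add]

lemma iterate_qE (c : Q4) (m : ℕ) :
    (tcQ3 (qE c))^[m] ((0,0),(0,0)) = qE ((qStep c)^[m] (0,0,0,0)) := by
  induction m with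
  | zero => simp [qE]
  | succ n ih => rw [Function.iterate_succ_apply', Function.iterate_succ_apply', ih, tcQ3_qE]

def chi (ε δ : ℝ) (x : Q4) : ℝ := x.1 + ε*x.2.1 + δ*x.2.2.1 - ε*δ*x.2.2.2

lemma chi_qStep (ε δ : ℝ) (hε : ε = 1 ∨ ε = -1) (hδ : δ = 1 ∨ δ = -1) (c x : Q4) :
    chi ε δ (qStep c x) = (chi ε δ x)^3 + chi ε δ c := by
  obtain ⟨p, q, r, s⟩ := x
  obtain ⟨a, b, d, e⟩ := c
  rcases hε with h1 | h1 <;> rcases hδ with h2 | h2 <;> subst h1 h2 <;>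
    simp only [chi, qStep, qMul, Prod.mk_add_mk] <;> ring

lemma tcNorm_qE (x : Q4) :
    tcNorm (qE x) = Real.sqrt (x.1^2 + x.2.1^2 + x.2.2.1^2 + x.2.2.2^2) := by
  obtain ⟨p, q, r, s⟩ := x
  simp only [tcNorm, bcNorm, qE]
  rw [Real.sq_sqrt (by positivity), Real.sq_sqrt (by positivity)]
  simp [norm_mul, Complex.norm_real, Real.norm_eq_abs, sq_abs]
  ring_nf

-- coordinate bounds vs norm
lemma abs_chi_le (ε δ : ℝ) (hε : ε = 1 ∨ ε = -1) (hδ : δ = 1 ∨ δ = -1) (x : Q4) :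
    |chi ε δ x| ≤ 4 * tcNorm (qE x) := by
  obtain ⟨p, q, r, s⟩ := x
  rw [tcNorm_qE]
  have h1 : |p| ≤ Real.sqrt (p^2+q^2+r^2+s^2) := by
    rw [← Real.sqrt_sq_eq_abs]; exact Real.sqrt_le_sqrt (by nlinarith)
  have h2 : |q| ≤ Real.sqrt (p^2+q^2+r^2+s^2) := by
    rw [← Real.sqrt_sq_eq_abs]; exact Real.sqrt_le_sqrt (by nlinarith)
  have h3 : |r| ≤ Real.sqrt (p^2+q^2+r^2+s^2) := by
    rw [← Real.sqrt_sq_eq_abs]; exact Real.sqrt_le_sqrt (by nlinarith)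
  have h4 : |s| ≤ Real.sqrt (p^2+q^2+r^2+s^2) := by
    rw [← Real.sqrt_sq_eq_abs]; exact Real.sqrt_le_sqrt (by nlinarith)
  rw [abs_le] at h1 h2 h3 h4
  rcases hε with h | h <;> rcases hδ with h' | h' <;> subst h h' <;>
    simp only [chi] <;> rw [abs_le] <;> constructor <;>
    [linarith; linarith; linarith; linarith; linarith; linarith; linarith; linarith]

lemma tcNorm_le_of_chi (x : Q4) (K : ℝ)
    (hA : |chi 1 1 x| ≤ K) (hB : |chi 1 (-1) x| ≤ K)
    (hC : |chi (-1) 1 x| ≤ K) (hD : |chi (-1) (-1) x| ≤ K) :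
    tcNorm (qE x) ≤ 2 * K := by
  obtain ⟨p, q, r, s⟩ := x
  have hK : 0 ≤ K := le_trans (abs_nonneg _) hA
  simp only [chi] at hA hB hC hD
  rw [abs_le] at hA hB hC hD
  rw [tcNorm_qE]
  have h1 : p^2 ≤ K^2 := by nlinarith [hA.1, hA.2, hB.1, hB.2, hC.1, hC.2, hD.1, hD.2]
  have h2 : q^2 ≤ K^2 := by nlinarith [hA.1, hA.2, hB.1, hB.2, hC.1, hC.2, hD.1, hD.2]
  have h3 : r^2 ≤ K^2 := by nlinarith [hA.1, hA.2, hB.1, hB.2, hC.1, hC.2, hD.1, hD.2]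
  have h4 : s^2 ≤ K^2 := by nlinarith [hA.1, hA.2, hB.1, hB.2, hC.1, hC.2, hD.1, hD.2]
  calc Real.sqrt (p^2 + q^2 + r^2 + s^2) ≤ Real.sqrt ((2*K)^2) :=
        Real.sqrt_le_sqrt (by nlinarith)
    _ = 2*K := Real.sqrt_sq (by linarith)

lemma sqrt3_pos : (0:ℝ) < Real.sqrt 3 := Real.sqrt_pos.mpr (by norm_num)

lemma r_eq : 2/(3*Real.sqrt 3) = 2*(Real.sqrt 3 / 3)^3 := by
  have h3 : Real.sqrt 3 ^ 2 = 3 := Real.sq_sqrt (by norm_num)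
  have h := sqrt3_pos
  field_simp
  nlinarith [h3]

lemma r_pos : (0:ℝ) < 2/(3*Real.sqrt 3) := by positivity

lemma iter_bounded_of_le (a : ℝ) (ha : |a| ≤ 2/(3*Real.sqrt 3)) (m : ℕ) :
    |(fun x => x^3 + a)^[m] 0| ≤ Real.sqrt 3 / 3 := by
  set t := Real.sqrt 3 / 3 with ht
  have ht2 : t^2 = 1/3 := by
    rw [ht, div_pow, Real.sq_sqrt (by norm_num)]; norm_num
  have htpos : 0 < t := by rw [ht]; positivity
  have hr : 2/(3*Real.sqrt 3) = 2*t^3 := r_eq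
  rw [hr] at ha
  induction m with
  | zero => simpa using htpos.le
  | succ n ih =>
      rw [Function.iterate_succ_apply']
      set x := (fun x => x^3 + a)^[n] 0 with hx
      have h1 : |x^3 + a| ≤ |x|^3 + |a| := by
        calc |x^3 + a| ≤ |x^3| + |a| := abs_add_le _ _
          _ = |x|^3 + |a| := by rw [abs_pow]
      have h2 : |x|^3 ≤ t^3 := pow_le_pow_left₀ (abs_nonneg x) ih 3
      have h3 : 3*t^3 = t := by nlinarith [ht2]
      calc |x^3 + a| ≤ |x|^3 + |a| := h1
        _ ≤ t^3 + 2*t^3 := by linarith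
        _ = t := by linarith

lemma iter_neg (a : ℝ) (m : ℕ) :
    (fun x => x^3 + (-a))^[m] 0 = -((fun x => x^3 + a)^[m] 0) := by
  induction m with
  | zero => simp
  | succ n ih =>
      rw [Function.iterate_succ_apply', Function.iterate_succ_apply', ih]
      ring

lemma iter_grow (a : ℝ) (h : 2/(3*Real.sqrt 3) < a) (m : ℕ) :
    a + m*(a - 2/(3*Real.sqrt 3)) ≤ (fun x => x^3 + a)^[m+1] 0 := by
  set r := 2/(3*Real.sqrt 3) with hrdef
  set t := Real.sqrt 3 / 3 with ht
  have ht2 : t^2 = 1/3 := by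
    rw [ht, div_pow, Real.sq_sqrt (by norm_num)]; norm_num
  have htpos : 0 < t := by rw [ht]; positivity
  have hr : r = 2*t^3 := r_eq
  have hapos : 0 < a := lt_trans r_pos h
  induction m with
  | zero => simp
  | succ n ih =>
      rw [Function.iterate_succ_apply']
      set x := (fun x => x^3 + a)^[n+1] 0 with hx
      have hx0 : 0 ≤ x := by
        have : (0:ℝ) ≤ a + n*(a-r) := by
          have : (0:ℝ) ≤ (n:ℝ) := Nat.cast_nonneg n
          nlinarith
        linarith [ih]
      have key : x + (a - r) ≤ x^3 + a := by
        have h0 : 0 ≤ (x - t)^2 * (x + 2*t) := by positivity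
        nlinarith [h0, ht2, hr]
      push_cast
      nlinarith [ih, key]

lemma exists_large (a M : ℝ) (h : 2/(3*Real.sqrt 3) < a) :
    ∃ m : ℕ, M < |(fun x => x^3 + a)^[m] 0| := by
  set r := 2/(3*Real.sqrt 3) with hrdef
  obtain ⟨n, hn⟩ := exists_nat_gt ((M - a)/(a - r))
  refine ⟨n+1, ?_⟩
  have hgrow := iter_grow a h n
  have hlt : M < a + n*(a - r) := by
    rw [div_lt_iff₀ (by linarith)] at hn
    nlinarith
  calc M < a + n*(a-r) := hlt
    _ ≤ (fun x => x^3 + a)^[n+1] 0 := hgrow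
    _ ≤ |(fun x => x^3 + a)^[n+1] 0| := le_abs_self _

lemma real_bounded_iff (a : ℝ) :
    (∃ M : ℝ, ∀ m : ℕ, |(fun x => x^3 + a)^[m] 0| ≤ M) ↔ |a| ≤ 2/(3*Real.sqrt 3) := by
  constructor
  · rintro ⟨M, hM⟩
    by_contra hc
    push_neg at hc
    rcases abs_cases a with ⟨he, _⟩ | ⟨he, _⟩
    · rw [he] at hc
      obtain ⟨m, hm⟩ := exists_large a M hc
      exact absurd (hM m) (not_le.mpr hm)
    · rw [he] at hc
      obtain ⟨m, hm⟩ := exists_large (-a) M hc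
      rw [iter_neg, abs_neg] at hm
      exact absurd (hM m) (not_le.mpr hm)
  · intro ha
    exact ⟨Real.sqrt 3 / 3, iter_bounded_of_le a ha⟩

lemma chi_zero (ε δ : ℝ) : chi ε δ (0,0,0,0) = 0 := by simp [chi]

lemma chi_iter (ε δ : ℝ) (hε : ε = 1 ∨ ε = -1) (hδ : δ = 1 ∨ δ = -1) (c : Q4) (m : ℕ) :
    chi ε δ ((qStep c)^[m] (0,0,0,0)) = (fun x => x^3 + chi ε δ c)^[m] 0 := by
  induction m with
  | zero => simp [chi]
  | succ n ih =>
      rw [Function.iterate_succ_apply', Function.iterate_succ_apply',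
        chi_qStep ε δ hε hδ, ih]

example (c₁ c₄ c₆ : ℝ) : chi 1 1 (c₁,c₄,c₆,0) = c₁ + c₄ + c₆ := by simp only [chi]; norm_num
example (c₁ c₄ c₆ : ℝ) : chi (-1) 1 (c₁,c₄,c₆,0) = c₁ - c₄ + c₆ := by simp only [chi]; norm_num; ring

theorem perplexbric_is_octahedron (c₁ c₄ c₆ : ℝ) :
    (∃ M : ℝ, ∀ m : ℕ, 1 ≤ m →
        tcNorm ((tcQ3 (((c₁ : ℂ), (c₄ : ℂ) * Complex.I),
          ((c₆ : ℂ) * Complex.I, 0)))^[m] ((0, 0), (0, 0))) ≤ M) ↔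
      |c₁| + |c₄| + |c₆| ≤ 2 / (3 * Real.sqrt 3) := by
  have hc : (((c₁ : ℂ), (c₄ : ℂ) * Complex.I), ((c₆ : ℂ) * Complex.I, (0:ℂ)))
      = qE (c₁, c₄, c₆, 0) := by simp [qE]
  have hv11 : chi 1 1 (c₁,c₄,c₆,(0:ℝ)) = c₁ + c₄ + c₆ := by simp only [chi]; norm_num
  have hv1m : chi 1 (-1) (c₁,c₄,c₆,(0:ℝ)) = c₁ + c₄ - c₆ := by simp only [chi]; norm_num; ring
  have hvm1 : chi (-1) 1 (c₁,c₄,c₆,(0:ℝ)) = c₁ - c₄ + c₆ := by simp only [chi]; norm_num; ring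
  have hvmm : chi (-1) (-1) (c₁,c₄,c₆,(0:ℝ)) = c₁ - c₄ - c₆ := by simp only [chi]; norm_num; ring
  constructor
  · rintro ⟨M, hM⟩
    have hbound : ∀ ε δ : ℝ, (ε = 1 ∨ ε = -1) → (δ = 1 ∨ δ = -1) →
        |chi ε δ (c₁,c₄,c₆,(0:ℝ))| ≤ 2/(3*Real.sqrt 3) := by
      intro ε δ hε hδ
      rw [← real_bounded_iff]
      refine ⟨max (4*M) 0, fun m => ?_⟩
      cases m with
      | zero => simp [le_max_iff]
      | succ n =>
        rw [← chi_iter ε δ hε hδ]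
        have h1 := abs_chi_le ε δ hε hδ ((qStep (c₁,c₄,c₆,0))^[n+1] (0,0,0,0))
        have h2 : tcNorm (qE ((qStep (c₁,c₄,c₆,0))^[n+1] (0,0,0,0))) ≤ M := by
          rw [← iterate_qE, ← hc]
          exact hM (n+1) (by omega)
        calc |chi ε δ ((qStep (c₁,c₄,c₆,0))^[n+1] (0,0,0,0))|
            ≤ 4 * tcNorm (qE ((qStep (c₁,c₄,c₆,0))^[n+1] (0,0,0,0))) := h1
          _ ≤ 4*M := by linarith
          _ ≤ max (4*M) 0 := le_max_left _ _
    have h11 := hbound 1 1 (Or.inl rfl) (Or.inl rfl)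
    have h1m := hbound 1 (-1) (Or.inl rfl) (Or.inr rfl)
    have hm1 := hbound (-1) 1 (Or.inr rfl) (Or.inl rfl)
    have hmm := hbound (-1) (-1) (Or.inr rfl) (Or.inr rfl)
    rw [hv11, abs_le] at h11
    rw [hv1m, abs_le] at h1m
    rw [hvm1, abs_le] at hm1
    rw [hvmm, abs_le] at hmm
    rcases abs_cases c₁ with ⟨e1, f1⟩ | ⟨e1, f1⟩ <;>
      rcases abs_cases c₄ with ⟨e2, f2⟩ | ⟨e2, f2⟩ <;>
      rcases abs_cases c₆ with ⟨e3, f3⟩ | ⟨e3, f3⟩ <;>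
      rw [e1, e2, e3] <;>
      linarith [h11.1, h11.2, h1m.1, h1m.2, hm1.1, hm1.2, hmm.1, hmm.2]
  · intro h
    have hA : |c₁ + c₄ + c₆| ≤ 2/(3*Real.sqrt 3) := by
      rw [abs_le]
      rcases abs_cases c₁ with ⟨e1, f1⟩ | ⟨e1, f1⟩ <;>
        rcases abs_cases c₄ with ⟨e2, f2⟩ | ⟨e2, f2⟩ <;>
        rcases abs_cases c₆ with ⟨e3, f3⟩ | ⟨e3, f3⟩ <;>
        constructor <;> linarith
    have hB : |c₁ + c₄ - c₆| ≤ 2/(3*Real.sqrt 3) := by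
      rw [abs_le]
      rcases abs_cases c₁ with ⟨e1, f1⟩ | ⟨e1, f1⟩ <;>
        rcases abs_cases c₄ with ⟨e2, f2⟩ | ⟨e2, f2⟩ <;>
        rcases abs_cases c₆ with ⟨e3, f3⟩ | ⟨e3, f3⟩ <;>
        constructor <;> linarith
    have hC : |c₁ - c₄ + c₆| ≤ 2/(3*Real.sqrt 3) := by
      rw [abs_le]
      rcases abs_cases c₁ with ⟨e1, f1⟩ | ⟨e1, f1⟩ <;>
        rcases abs_cases c₄ with ⟨e2, f2⟩ | ⟨e2, f2⟩ <;>
        rcases abs_cases c₆ with ⟨e3, f3⟩ | ⟨e3, f3⟩ <;>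
        constructor <;> linarith
    have hD : |c₁ - c₄ - c₆| ≤ 2/(3*Real.sqrt 3) := by
      rw [abs_le]
      rcases abs_cases c₁ with ⟨e1, f1⟩ | ⟨e1, f1⟩ <;>
        rcases abs_cases c₄ with ⟨e2, f2⟩ | ⟨e2, f2⟩ <;>
        rcases abs_cases c₆ with ⟨e3, f3⟩ | ⟨e3, f3⟩ <;>
        constructor <;> linarith
    refine ⟨2*(Real.sqrt 3/3), fun m _ => ?_⟩
    rw [hc, iterate_qE]
    refine tcNorm_le_of_chi _ _ ?_ ?_ ?_ ?_
    · rw [chi_iter 1 1 (Or.inl rfl) (Or.inl rfl), hv11]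
      exact iter_bounded_of_le _ hA m
    · rw [chi_iter 1 (-1) (Or.inl rfl) (Or.inr rfl), hv1m]
      exact iter_bounded_of_le _ hB m
    · rw [chi_iter (-1) 1 (Or.inr rfl) (Or.inl rfl), hvm1]
      exact iter_bounded_of_le _ hC m
    · rw [chi_iter (-1) (-1) (Or.inr rfl) (Or.inr rfl), hvmm]
      exact iter_bounded_of_le _ hD m
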